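/- Let q be an odd prime power, C_0 the nonzero squares of F_q and C_1 the nonsquares. Let f_0, f_1 : F_q → F_q, and define f : F_q → F_q by f(0) = 0, f = f_0 on C_0, f = f_1 on C_1. Assume f is a bijection of F_q, that f_0 maps C_0 into C_1 and f_1 maps C_1 into C_0, and let g_0, g_1 : F_q → F_q satisfy g_0(0) = g_1(0) = 0, g_0(f_0(c)) = c for all c ∈ C_0, and g_1(f_1(c)) = c for all c ∈ C_1. Then the map h(x) = (1/2)g_0(x)(1 - x^((q-1)/2)) + (1/2)g_1(x)(1 + x^((q-1)/2)) satisfies h(f(c)) = c for all c ∈ F_q. -/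

import Mathlib

theorem stmt_5 {F : Type*} [Field F] [Fintype F] (hodd : Odd (Fintype.card F))
    (f₀ f₁ f g₀ g₁ : F → F)
    (C₀ C₁ : Set F)
    (hC₀ : C₀ = {x : F | x ≠ 0 ∧ IsSquare x})
    (hC₁ : C₁ = {x : F | x ≠ 0 ∧ ¬ IsSquare x})
    (hf0 : f 0 = 0)
    (hfs : ∀ x ∈ C₀, f x = f₀ x)
    (hfn : ∀ x ∈ C₁, f x = f₁ x)
    (hbij : Function.Bijective f)
    (hmaps0 : Set.MapsTo f₀ C₀ C₁)
    (hmaps1 : Set.MapsTo f₁ C₁ C₀)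
    (hg00 : g₀ 0 = 0) (hg10 : g₁ 0 = 0)
    (hg0 : ∀ c ∈ C₀, g₀ (f₀ c) = c)
    (hg1 : ∀ c ∈ C₁, g₁ (f₁ c) = c) :
    ∀ c : F,
      (1 / 2) * g₀ (f c) * (1 - (f c) ^ ((Fintype.card F - 1) / 2)) +
      (1 / 2) * g₁ (f c) * (1 + (f c) ^ ((Fintype.card F - 1) / 2)) = c := by
  have hchar : ringChar F ≠ 2 := by
    intro h
    have := FiniteField.even_card_of_char_two h
    rw [Nat.odd_iff] at hodd
    omega
  have h2 : (2 : F) ≠ 0 := by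
    have := Ring.two_ne_zero hchar
    exact this
  have hexp : (Fintype.card F - 1) / 2 = Fintype.card F / 2 := by
    rw [Nat.odd_iff] at hodd
    omega
  intro c
  rw [hexp]
  rcases eq_or_ne c 0 with rfl | hc
  · simp [hf0, hg00, hg10]
  · by_cases hsq : IsSquare c
    · have hcC : c ∈ C₀ := by rw [hC₀]; exact ⟨hc, hsq⟩
      have hfc := hfs c hcC
      have hmem : f₀ c ∈ C₁ := hmaps0 hcC
      rw [hC₁] at hmem
      have hne : f₀ c ≠ 0 := hmem.1
      have hpow : (f₀ c) ^ (Fintype.card F / 2) = -1 := by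
        rcases FiniteField.pow_dichotomy hchar hne with h | h
        · exact absurd ((FiniteField.isSquare_iff hchar hne).mpr h) hmem.2
        · exact h
      rw [hfc, hpow, hg0 c hcC]
      field_simp
      norm_num
      ring
    · have hcC : c ∈ C₁ := by rw [hC₁]; exact ⟨hc, hsq⟩
      have hfc := hfn c hcC
      have hmem : f₁ c ∈ C₀ := hmaps1 hcC
      rw [hC₀] at hmem
      have hpow : (f₁ c) ^ (Fintype.card F / 2) = 1 :=
        (FiniteField.isSquare_iff hchar hmem.1).mp hmem.2
      rw [hfc, hpow, hg1 c hcC]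
      field_simp
      norm_num
      ring
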